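/- (Theorem 2.) For every γ ∈ (0,1], the maximum of the normalized guessing probability G = V/γ², over all γ-admissible triples (Π₀,Π₁,Π_∅) whose elements are all PPT, equals 1/2 + 1/(4√2); in particular this maximum is independent of γ. -/

import Mathlib

open Matrix Complex Kronecker BigOperators ComplexOrder

noncomputable section

abbrev Mat2 := Matrix (Fin 2) (Fin 2) ℂ
abbrev Mat4 := Matrix (Fin 2 × Fin 2) (Fin 2 × Fin 2) ℂ

/-- Pauli X matrix -/
def PX : Mat2 := !![0, 1; 1, 0]

/-- Pauli Y matrix -/
def PY : Mat2 := !![0, -Complex.I; Complex.I, 0]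

/-- sign (−1)^b for a bit b -/
def bsign (b : Bool) : ℂ := if b then -1 else 1

/-- boolean function f(x̄,ȳ) = (x₁·y₁) XOR x₂ XOR y₂ -/
def fxy (x y : Bool × Bool) : Bool := (((x.1 && y.1)).xor x.2).xor y.2

/-- qubit input states ω_{x̄}: ω_{(0,x₂)} = (I+(−1)^{x₂}X)/2, ω_{(1,x₂)} = (I+(−1)^{x₂}Y)/2 -/
def omg (x : Bool × Bool) : Mat2 :=
  (1/2 : ℂ) • ((1 : Mat2) + bsign x.2 • (if x.1 then PY else PX))

/-- qubit input states τ_{ȳ} = (I+(−1)^{y₂}(X+(−1)^{y₁}Y)/√2)/2 -/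
def tau (y : Bool × Bool) : Mat2 :=
  (1/2 : ℂ) • ((1 : Mat2) + (bsign y.2 / (Real.sqrt 2 : ℂ)) • (PX + bsign y.1 • PY))

/-- averaged input states ρ₀ (for c = false) and ρ₁ (for c = true) -/
def rho (c : Bool) : Mat4 :=
  (1/8 : ℂ) • ∑ x : Bool × Bool, ∑ y : Bool × Bool,
    (if fxy x y = c then omg x ⊗ₖ tau y else 0)

/-- standard basis vectors of ℂ⁴ ≅ ℂ² ⊗ ℂ² -/
def ket (i j : Fin 2) : (Fin 2 × Fin 2) → ℂ := fun p => if p = (i, j) then 1 else 0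

def PhiP : (Fin 2 × Fin 2) → ℂ := fun p => (1 / (Real.sqrt 2 : ℂ)) * (ket 0 0 p + ket 1 1 p)
def PhiM : (Fin 2 × Fin 2) → ℂ := fun p => (1 / (Real.sqrt 2 : ℂ)) * (ket 0 0 p - ket 1 1 p)
def PsiP : (Fin 2 × Fin 2) → ℂ := fun p => (1 / (Real.sqrt 2 : ℂ)) * (ket 0 1 p + ket 1 0 p)
def PsiM : (Fin 2 × Fin 2) → ℂ := fun p => (1 / (Real.sqrt 2 : ℂ)) * (ket 0 1 p - ket 1 0 p)

/-- rank one projector |v⟩⟨v| -/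
def proj (v : (Fin 2 × Fin 2) → ℂ) : Mat4 := Matrix.vecMulVec v (star v)

/-- a γ-admissible measurement triple -/
def Admissible (γ : ℝ) (P0 P1 Pe : Mat4) : Prop :=
  P0.PosSemidef ∧ P1.PosSemidef ∧ Pe.PosSemidef ∧
  P0 + P1 + Pe = 1 ∧
  ∀ x y : Bool × Bool, ((omg x ⊗ₖ tau y) * Pe).trace = 1 - (γ : ℂ)^2

/-- guessing value V = (1/2)·Tr[ρ₀Π₀ + ρ₁Π₁] (a real number) -/
def Gval (P0 P1 : Mat4) : ℝ := (1/2) * ((rho false * P0 + rho true * P1).trace).re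

/-- partial transpose over the second tensor factor -/
def ptransB (M : Mat4) : Mat4 := Matrix.of fun p q => M (p.1, q.2) (q.1, p.2)

/-- positivity under partial transpose -/
def IsPPT (M : Mat4) : Prop := M.PosSemidef ∧ (ptransB M).PosSemidef

/-! ### Auxiliary scalar lemmas -/

lemma aux_sqrt2_sq : (Real.sqrt 2 : ℂ) * (Real.sqrt 2 : ℂ) = 2 := by
  rw [← Complex.ofReal_mul, Real.mul_self_sqrt (by norm_num)]; norm_num

lemma aux_sqrt2_pow2 : (Real.sqrt 2 : ℂ) ^ 2 = 2 := by rw [sq, aux_sqrt2_sq]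
lemma aux_sqrt2_pow3 : (Real.sqrt 2 : ℂ) ^ 3 = 2 * (Real.sqrt 2 : ℂ) := by
  rw [pow_succ, aux_sqrt2_pow2]
lemma aux_sqrt2_pow4 : (Real.sqrt 2 : ℂ) ^ 4 = 4 := by
  rw [show ((Real.sqrt 2 : ℂ)) ^ 4 = (((Real.sqrt 2 : ℂ)) ^ 2) ^ 2 by ring, aux_sqrt2_pow2]
  norm_num
lemma aux_sqrt2_pow5 : (Real.sqrt 2 : ℂ) ^ 5 = 4 * (Real.sqrt 2 : ℂ) := by
  rw [show ((Real.sqrt 2 : ℂ)) ^ 5 = (((Real.sqrt 2 : ℂ)) ^ 2) ^ 2 * (Real.sqrt 2 : ℂ) by ring,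
    aux_sqrt2_pow2]
  norm_num

lemma aux_sqrt2_ne : (Real.sqrt 2 : ℂ) ≠ 0 := by
  simp [Complex.ofReal_eq_zero]

lemma aux_inv_sqrt2 : ((Real.sqrt 2 : ℂ))⁻¹ = (Real.sqrt 2 : ℂ) / 2 := by
  rw [inv_eq_one_div, div_eq_div_iff aux_sqrt2_ne two_ne_zero, one_mul, aux_sqrt2_sq]

lemma aux_div_sqrt2 (z : ℂ) : z / (Real.sqrt 2 : ℂ) = z * (Real.sqrt 2 : ℂ) / 2 := by
  rw [div_eq_mul_inv, aux_inv_sqrt2, mul_div_assoc]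

/-! ### General matrix lemmas -/

lemma aux_trace_conjTranspose_mul_self_nonneg (M : Mat4) : 0 ≤ (Mᴴ * M).trace := by
  rw [Matrix.trace]
  apply Finset.sum_nonneg
  intro j _
  rw [Matrix.diag_apply, Matrix.mul_apply]
  apply Finset.sum_nonneg
  intro i _
  simpa [Matrix.conjTranspose_apply] using star_mul_self_nonneg (M i j)

lemma aux_psd_eq_ct_mul_self {A : Mat4} (hA : A.PosSemidef) : ∃ C : Mat4, A = Cᴴ * C := by
  open scoped MatrixOrder in
  exact ⟨CFC.sqrt A, by
    rw [← Matrix.star_eq_conjTranspose, (CFC.sqrt_nonneg A).isSelfAdjoint.star_eq,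
      CFC.sqrt_mul_sqrt_self A hA.nonneg]⟩

lemma aux_trace_psd_mul_nonneg {A B : Mat4} (hA : A.PosSemidef) (hB : B.PosSemidef) :
    0 ≤ (A * B).trace := by
  obtain ⟨C, rfl⟩ := aux_psd_eq_ct_mul_self hA
  obtain ⟨D, rfl⟩ := aux_psd_eq_ct_mul_self hB
  have h1 : Cᴴ * C * (Dᴴ * D) = (Cᴴ * (C * Dᴴ)) * D := by
    simp [Matrix.mul_assoc]
  have h2 : (C * Dᴴ)ᴴ * (C * Dᴴ) = D * (Cᴴ * (C * Dᴴ)) := by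
    simp [Matrix.conjTranspose_mul, Matrix.mul_assoc]
  rw [h1, Matrix.trace_mul_comm, ← h2]
  exact aux_trace_conjTranspose_mul_self_nonneg _

lemma aux_trace_ptransB_mul (M P : Mat4) : (ptransB M * P).trace = (M * ptransB P).trace := by
  have key := Fintype.sum_equiv
    (Function.Involutive.toPerm
      (fun z : (Fin 2 × Fin 2) × (Fin 2 × Fin 2) => ((z.1.1, z.2.2), (z.2.1, z.1.2)))
      (fun z => rfl))
    (fun z : (Fin 2 × Fin 2) × (Fin 2 × Fin 2) =>
      M (z.1.1, z.2.2) (z.2.1, z.1.2) * P z.2 z.1)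
    (fun w : (Fin 2 × Fin 2) × (Fin 2 × Fin 2) =>
      M w.1 w.2 * P (w.2.1, w.1.2) (w.1.1, w.2.2))
    (fun z => rfl)
  simp only [Matrix.trace, Matrix.diag_apply, Matrix.mul_apply, ptransB, Matrix.of_apply]
  rw [← Finset.sum_product', ← Finset.sum_product']
  exact key

lemma aux_ptransB_add (M N : Mat4) : ptransB (M + N) = ptransB M + ptransB N := rfl

lemma aux_ptransB_smul (c : ℂ) (M : Mat4) : ptransB (c • M) = c • ptransB M := rfl

lemma aux_ptransB_one : ptransB (1 : Mat4) = 1 := by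
  ext ⟨i, j⟩ ⟨k, l⟩
  by_cases h1 : i = k <;> by_cases h2 : j = l <;>
    simp [ptransB, Matrix.one_apply, Prod.ext_iff, h1, h2, eq_comm]

lemma aux_psd_smul {A : Mat4} (hA : A.PosSemidef) {r : ℝ} (hr : 0 ≤ r) :
    (((r : ℂ)) • A).PosSemidef := by
  rw [Matrix.posSemidef_iff_dotProduct_mulVec]
  constructor
  · have h := hA.1
    unfold Matrix.IsHermitian at h ⊢
    rw [Matrix.conjTranspose_smul, h]
    congr 1
    simp [Complex.star_def, Complex.conj_ofReal]
  · intro x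
    have h := hA.dotProduct_mulVec_nonneg x
    rw [Matrix.smul_mulVec, dotProduct_smul]
    exact mul_nonneg (Complex.zero_le_real.mpr hr) h

lemma aux_proj_psd (v : (Fin 2 × Fin 2) → ℂ) : (proj v).PosSemidef := by
  rw [Matrix.posSemidef_iff_dotProduct_mulVec]
  constructor
  · ext p q
    simp only [proj, Matrix.conjTranspose_apply, Matrix.vecMulVec_apply, Pi.star_apply,
      star_mul', star_star]
    ring
  · intro x
    have key : star x ⬝ᵥ (proj v).mulVec x = star (star v ⬝ᵥ x) * (star v ⬝ᵥ x) := by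
      simp only [proj, Matrix.mulVec, dotProduct, Matrix.vecMulVec_apply,
        Pi.star_apply, star_sum, star_mul', star_star, Finset.sum_mul, Finset.mul_sum]
      rw [Finset.sum_comm]
      apply Finset.sum_congr rfl
      intro p _
      apply Finset.sum_congr rfl
      intro q _
      ring
    rw [key]
    exact star_mul_self_nonneg _

/-! ### The special matrices -/

def Tm : Mat4 := Matrix.of fun p q =>
  if (p = (0,1) ∧ q = (1,0)) ∨ (p = (1,0) ∧ q = (0,1)) then 1 else 0

def Tm' : Mat4 := Matrix.of fun p q =>
  if (p = (0,0) ∧ q = (1,1)) ∨ (p = (1,1) ∧ q = (0,0)) then 1 else 0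

set_option maxHeartbeats 1600000 in
lemma aux_rho_eq (c : Bool) : rho c =
    (1/4 : ℂ) • (1 : Mat4) + (bsign c * (Real.sqrt 2 : ℂ) / 8) • Tm := by
  cases c <;>
  · ext ⟨i, j⟩ ⟨k, l⟩
    simp only [rho, Fintype.sum_prod_type, Fintype.sum_bool, fxy, Tm]
    fin_cases i <;> fin_cases j <;> fin_cases k <;> fin_cases l <;>
    · simp only [Matrix.smul_apply, Matrix.sum_apply, Matrix.add_apply, Matrix.one_apply,
        Matrix.of_apply, Matrix.kroneckerMap_apply, omg, tau, bsign, PX, PY, aux_div_sqrt2,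
        Bool.xor_false, Bool.xor_true, Bool.and_false, Bool.and_true, Bool.and_self,
        if_true, if_false, Matrix.cons_val', Matrix.cons_val_zero, Matrix.cons_val_one,
        Matrix.head_cons, Matrix.head_fin_const, Matrix.empty_val', Matrix.cons_val_fin_one]
      norm_num [Prod.ext_iff]
      try ring_nf
      try simp only [aux_sqrt2_pow2, aux_sqrt2_pow3, aux_sqrt2_pow4, aux_sqrt2_pow5]
      try ring_nf
      try norm_num
      try ring

lemma aux_ptransB_Tm : ptransB Tm = Tm' := by
  ext ⟨i, j⟩ ⟨k, l⟩
  fin_cases i <;> fin_cases j <;> fin_cases k <;> fin_cases l <;>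
    simp [ptransB, Tm, Tm', Prod.ext_iff]

set_option maxHeartbeats 1600000 in
lemma aux_G0 : proj PsiM + ptransB (proj PhiM) = (1/2 : ℂ) • (1 : Mat4) - Tm := by
  ext ⟨i, j⟩ ⟨k, l⟩
  fin_cases i <;> fin_cases j <;> fin_cases k <;> fin_cases l <;>
  · simp only [proj, ptransB, Matrix.add_apply, Matrix.sub_apply, Matrix.smul_apply,
      Matrix.one_apply, Matrix.of_apply, Matrix.vecMulVec_apply, Pi.star_apply,
      PsiM, PhiM, ket, Tm, one_div, aux_inv_sqrt2]
    norm_num [Prod.ext_iff, Complex.star_def, _root_.map_sub, _root_.map_add, _root_.map_mul, _root_.map_div₀,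
      Complex.conj_ofReal]
    try ring_nf
    try simp only [aux_sqrt2_pow2, aux_sqrt2_pow3, aux_sqrt2_pow4, aux_sqrt2_pow5]
    try ring_nf
    try norm_num
    try ring

set_option maxHeartbeats 1600000 in
lemma aux_G1 : proj PsiP + ptransB (proj PhiP) = (1/2 : ℂ) • (1 : Mat4) + Tm := by
  ext ⟨i, j⟩ ⟨k, l⟩
  fin_cases i <;> fin_cases j <;> fin_cases k <;> fin_cases l <;>
  · simp only [proj, ptransB, Matrix.add_apply, Matrix.sub_apply, Matrix.smul_apply,
      Matrix.one_apply, Matrix.of_apply, Matrix.vecMulVec_apply, Pi.star_apply,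
      PsiP, PhiP, ket, Tm, one_div, aux_inv_sqrt2]
    norm_num [Prod.ext_iff, Complex.star_def, _root_.map_sub, _root_.map_add, _root_.map_mul, _root_.map_div₀,
      Complex.conj_ofReal]
    try ring_nf
    try simp only [aux_sqrt2_pow2, aux_sqrt2_pow3, aux_sqrt2_pow4, aux_sqrt2_pow5]
    try ring_nf
    try norm_num
    try ring

/-! ### Hermiticity and positivity of the witness matrices -/

lemma aux_Tm_herm : Tm.IsHermitian := by
  ext ⟨i, j⟩ ⟨k, l⟩
  fin_cases i <;> fin_cases j <;> fin_cases k <;> fin_cases l <;>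
    simp [Tm, Matrix.conjTranspose_apply, Prod.ext_iff]

lemma aux_Tm'_herm : Tm'.IsHermitian := by
  ext ⟨i, j⟩ ⟨k, l⟩
  fin_cases i <;> fin_cases j <;> fin_cases k <;> fin_cases l <;>
    simp [Tm', Matrix.conjTranspose_apply, Prod.ext_iff]

lemma aux_psd_one_add_Tm : ((1 : Mat4) + Tm).PosSemidef := by
  rw [Matrix.posSemidef_iff_dotProduct_mulVec]
  constructor
  · exact Matrix.isHermitian_one.add aux_Tm_herm
  · intro x
    have key : star x ⬝ᵥ ((1 : Mat4) + Tm) *ᵥ x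
        = star (x (0,0)) * x (0,0) + star (x (1,1)) * x (1,1)
          + star (x (0,1) + x (1,0)) * (x (0,1) + x (1,0)) := by
      simp only [dotProduct, Matrix.mulVec, Matrix.add_apply, Matrix.one_apply, Tm,
        Matrix.of_apply, Fintype.sum_prod_type, Fin.sum_univ_two, Pi.star_apply,
        Prod.ext_iff, star_add]
      norm_num
      ring
    rw [key]
    exact add_nonneg (add_nonneg (star_mul_self_nonneg _) (star_mul_self_nonneg _))
      (star_mul_self_nonneg _)

lemma aux_psd_one_sub_Tm : ((1 : Mat4) - Tm).PosSemidef := by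
  rw [Matrix.posSemidef_iff_dotProduct_mulVec]
  constructor
  · exact Matrix.isHermitian_one.sub aux_Tm_herm
  · intro x
    have key : star x ⬝ᵥ ((1 : Mat4) - Tm) *ᵥ x
        = star (x (0,0)) * x (0,0) + star (x (1,1)) * x (1,1)
          + star (x (0,1) - x (1,0)) * (x (0,1) - x (1,0)) := by
      simp only [dotProduct, Matrix.mulVec, Matrix.sub_apply, Matrix.one_apply, Tm,
        Matrix.of_apply, Fintype.sum_prod_type, Fin.sum_univ_two, Pi.star_apply,
        Prod.ext_iff, star_sub]
      norm_num
      ring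
    rw [key]
    exact add_nonneg (add_nonneg (star_mul_self_nonneg _) (star_mul_self_nonneg _))
      (star_mul_self_nonneg _)

lemma aux_psd_one_add_Tm' : ((1 : Mat4) + Tm').PosSemidef := by
  rw [Matrix.posSemidef_iff_dotProduct_mulVec]
  constructor
  · exact Matrix.isHermitian_one.add aux_Tm'_herm
  · intro x
    have key : star x ⬝ᵥ ((1 : Mat4) + Tm') *ᵥ x
        = star (x (0,1)) * x (0,1) + star (x (1,0)) * x (1,0)
          + star (x (0,0) + x (1,1)) * (x (0,0) + x (1,1)) := by
      simp only [dotProduct, Matrix.mulVec, Matrix.add_apply, Matrix.one_apply, Tm',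
        Matrix.of_apply, Fintype.sum_prod_type, Fin.sum_univ_two, Pi.star_apply,
        Prod.ext_iff, star_add]
      norm_num
      ring
    rw [key]
    exact add_nonneg (add_nonneg (star_mul_self_nonneg _) (star_mul_self_nonneg _))
      (star_mul_self_nonneg _)

lemma aux_psd_one_sub_Tm' : ((1 : Mat4) - Tm').PosSemidef := by
  rw [Matrix.posSemidef_iff_dotProduct_mulVec]
  constructor
  · exact Matrix.isHermitian_one.sub aux_Tm'_herm
  · intro x
    have key : star x ⬝ᵥ ((1 : Mat4) - Tm') *ᵥ x
        = star (x (0,1)) * x (0,1) + star (x (1,0)) * x (1,0)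
          + star (x (0,0) - x (1,1)) * (x (0,0) - x (1,1)) := by
      simp only [dotProduct, Matrix.mulVec, Matrix.sub_apply, Matrix.one_apply, Tm',
        Matrix.of_apply, Fintype.sum_prod_type, Fin.sum_univ_two, Pi.star_apply,
        Prod.ext_iff, star_sub]
      norm_num
      ring
    rw [key]
    exact add_nonneg (add_nonneg (star_mul_self_nonneg _) (star_mul_self_nonneg _))
      (star_mul_self_nonneg _)

/-! ### Trace computations -/

lemma aux_trace_one : (1 : Mat4).trace = 4 := by
  rw [Matrix.trace_one]
  norm_num

lemma aux_trace_Tm : Tm.trace = 0 := by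
  simp [Matrix.trace, Matrix.diag_apply, Tm, Fintype.sum_prod_type, Fin.sum_univ_two,
    Prod.ext_iff]

lemma aux_trace_TmTm : (Tm * Tm).trace = 2 := by
  simp [Matrix.trace, Matrix.diag_apply, Matrix.mul_apply, Tm, Fintype.sum_prod_type,
    Fin.sum_univ_two, Prod.ext_iff]
  norm_num

lemma aux_trace_comb (a b c d : ℂ) :
    ((a • (1 : Mat4) + b • Tm) * (c • (1 : Mat4) + d • Tm)).trace = 4 * (a * c) + 2 * (b * d) := by
  simp only [Matrix.add_mul, Matrix.mul_add, Matrix.smul_mul, Matrix.mul_smul,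
    Matrix.trace_add, Matrix.trace_smul, Matrix.one_mul, Matrix.mul_one,
    aux_trace_one, aux_trace_Tm, aux_trace_TmTm, smul_eq_mul, smul_smul]
  ring

lemma aux_trace_omg (x : Bool × Bool) : (omg x).trace = 1 := by
  obtain ⟨x1, x2⟩ := x
  cases x1 <;> cases x2 <;>
    simp [omg, PX, PY, bsign, Matrix.trace, Matrix.diag_apply, Fin.sum_univ_two,
      Matrix.one_apply] <;> norm_num

lemma aux_trace_tau (y : Bool × Bool) : (tau y).trace = 1 := by
  obtain ⟨y1, y2⟩ := y
  cases y1 <;> cases y2 <;>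
    simp [tau, PX, PY, bsign, Matrix.trace, Matrix.diag_apply, Fin.sum_univ_two,
      Matrix.one_apply] <;> norm_num

/-! ### Sum of all input states -/

lemma aux_rho_add : rho false + rho true
    = (1/8 : ℂ) • ∑ x : Bool × Bool, ∑ y : Bool × Bool, (omg x ⊗ₖ tau y) := by
  simp only [rho, ← smul_add, ← Finset.sum_add_distrib]
  congr 1
  apply Finset.sum_congr rfl
  intro x _
  apply Finset.sum_congr rfl
  intro y _
  cases h : fxy x y <;> simp [h]

lemma aux_sum_kron :
    ∑ x : Bool × Bool, ∑ y : Bool × Bool, (omg x ⊗ₖ tau y) = (4 : ℂ) • (1 : Mat4) := by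
  have h := aux_rho_add
  rw [aux_rho_eq false, aux_rho_eq true] at h
  have h2 : ∑ x : Bool × Bool, ∑ y : Bool × Bool, (omg x ⊗ₖ tau y)
      = (8 : ℂ) • ((1/8 : ℂ) • ∑ x : Bool × Bool, ∑ y : Bool × Bool, (omg x ⊗ₖ tau y)) := by
    rw [smul_smul]
    norm_num
  rw [h2, ← h]
  simp only [bsign]
  norm_num
  module

/-! ### Dual certificate identities -/

lemma aux_cert0 : rho false = ((1/4 : ℂ) + (Real.sqrt 2 : ℂ)/16) • (1 : Mat4)
    - ((Real.sqrt 2 : ℂ)/8) • (proj PsiM + ptransB (proj PhiM)) := by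
  rw [aux_G0, aux_rho_eq false]
  norm_num [bsign]
  module

lemma aux_cert1 : rho true = ((1/4 : ℂ) + (Real.sqrt 2 : ℂ)/16) • (1 : Mat4)
    - ((Real.sqrt 2 : ℂ)/8) • (proj PsiP + ptransB (proj PhiP)) := by
  rw [aux_G1, aux_rho_eq true]
  norm_num [bsign]
  module

lemma aux_target_eq : 1/(4*Real.sqrt 2) = Real.sqrt 2/8 := by
  have h2 := Real.mul_self_sqrt (show (0:ℝ) ≤ 2 by norm_num)
  have h : (0:ℝ) < Real.sqrt 2 := Real.sqrt_pos.mpr (by norm_num)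
  rw [div_eq_div_iff (by positivity) (by norm_num : (8:ℝ) ≠ 0)]
  nlinarith [h2]

lemma aux_ptransB_sub (M N : Mat4) : ptransB (M - N) = ptransB M - ptransB N := rfl

lemma aux_rho_false : rho false = (1/4 : ℂ) • (1 : Mat4) + ((Real.sqrt 2 : ℂ)/8) • Tm := by
  rw [aux_rho_eq]
  norm_num [bsign]

lemma aux_rho_true : rho true = (1/4 : ℂ) • (1 : Mat4) + (-((Real.sqrt 2 : ℂ)/8)) • Tm := by
  rw [aux_rho_eq]
  norm_num [bsign]
  module

/-- Theorem 2: for every γ ∈ (0,1], the maximum of G = V/γ² over all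
γ-admissible PPT triples equals 1/2 + 1/(4√2), independently of γ. -/
theorem optimal_ppt_guessing_probability (γ : ℝ) (hγ : 0 < γ) (hγ' : γ ≤ 1) :
    IsGreatest {g : ℝ | ∃ P0 P1 Pe : Mat4, Admissible γ P0 P1 Pe ∧
        IsPPT P0 ∧ IsPPT P1 ∧ IsPPT Pe ∧ g = Gval P0 P1 / γ^2}
      (1/2 + 1/(4*Real.sqrt 2)) := by
  have hγ2 : (0:ℝ) < γ^2 := by positivity
  have hr0 : (0:ℝ) ≤ γ^2/2 := by positivity
  have hre : (0:ℝ) ≤ 1 - γ^2 := by nlinarith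
  constructor
  · -- membership : the optimal PPT triple
    set P0w : Mat4 := ((γ^2/2 : ℝ) : ℂ) • ((1 : Mat4) + Tm) with hP0w
    set P1w : Mat4 := ((γ^2/2 : ℝ) : ℂ) • ((1 : Mat4) - Tm) with hP1w
    set Pew : Mat4 := ((1 - γ^2 : ℝ) : ℂ) • (1 : Mat4) with hPew
    have psd0 : P0w.PosSemidef := aux_psd_smul aux_psd_one_add_Tm hr0
    have psd1 : P1w.PosSemidef := aux_psd_smul aux_psd_one_sub_Tm hr0
    have psde : Pew.PosSemidef := aux_psd_smul (Matrix.PosSemidef.one) hre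
    have htr0 : (rho false * P0w).trace
        = 4 * ((1/4) * ((γ^2/2 : ℝ) : ℂ)) + 2 * (((Real.sqrt 2 : ℂ)/8) * ((γ^2/2 : ℝ) : ℂ)) := by
      rw [aux_rho_false, hP0w, smul_add]
      exact aux_trace_comb _ _ _ _
    have hP1w' : P1w = ((γ^2/2 : ℝ) : ℂ) • (1 : Mat4) + (-((γ^2/2 : ℝ) : ℂ)) • Tm := by
      rw [hP1w]; module
    have htr1 : (rho true * P1w).trace
        = 4 * ((1/4) * ((γ^2/2 : ℝ) : ℂ))
          + 2 * ((-((Real.sqrt 2 : ℂ)/8)) * (-((γ^2/2 : ℝ) : ℂ))) := by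
      rw [aux_rho_true, hP1w']
      exact aux_trace_comb _ _ _ _
    have htr : (rho false * P0w + rho true * P1w).trace
        = ((2*(γ^2/2) + Real.sqrt 2 * (γ^2/2) / 2 : ℝ) : ℂ) := by
      rw [Matrix.trace_add, htr0, htr1]
      push_cast
      ring
    have hGval : Gval P0w P1w = γ^2/2 + Real.sqrt 2 * γ^2 / 8 := by
      rw [Gval, htr, Complex.ofReal_re]
      ring
    refine ⟨P0w, P1w, Pew, ⟨psd0, psd1, psde, ?_, ?_⟩, ⟨psd0, ?_⟩, ⟨psd1, ?_⟩, ⟨psde, ?_⟩, ?_⟩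
    · -- sums to identity
      rw [hP0w, hP1w, hPew]
      match_scalars <;> (push_cast; ring)
    · -- the abstention constraint
      intro x y
      rw [hPew, Matrix.mul_smul, Matrix.mul_one, Matrix.trace_smul, smul_eq_mul,
        Matrix.trace_kronecker, aux_trace_omg, aux_trace_tau]
      push_cast
      ring
    · -- PPT of P0w
      rw [hP0w, aux_ptransB_smul, aux_ptransB_add, aux_ptransB_one, aux_ptransB_Tm]
      exact aux_psd_smul aux_psd_one_add_Tm' hr0
    · -- PPT of P1w
      rw [hP1w, aux_ptransB_smul, aux_ptransB_sub, aux_ptransB_one, aux_ptransB_Tm]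
      exact aux_psd_smul aux_psd_one_sub_Tm' hr0
    · -- PPT of Pew
      rw [hPew, aux_ptransB_smul, aux_ptransB_one]
      exact aux_psd_smul (Matrix.PosSemidef.one) hre
    · -- the value
      rw [hGval, aux_target_eq]
      field_simp
  · -- upper bound
    rintro g ⟨P0, P1, Pe, ⟨hP0, hP1, hPe, hsum, hcon⟩, hppt0, hppt1, _, rfl⟩
    -- trace of Pe from the constraints
    have hTrPe : Pe.trace = 4 * (1 - (γ:ℂ)^2) := by
      have h16 : ∑ x : Bool × Bool, ∑ y : Bool × Bool, ((omg x ⊗ₖ tau y) * Pe).trace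
          = 16 * (1 - (γ:ℂ)^2) := by
        simp only [hcon]
        simp [Finset.sum_const]
        ring
      have hL : ∑ x : Bool × Bool, ∑ y : Bool × Bool, ((omg x ⊗ₖ tau y) * Pe).trace
          = ((∑ x : Bool × Bool, ∑ y : Bool × Bool, (omg x ⊗ₖ tau y)) * Pe).trace := by
        simp [Matrix.sum_mul, Matrix.trace_sum]
      rw [hL, aux_sum_kron, Matrix.smul_mul, Matrix.one_mul, Matrix.trace_smul,
        smul_eq_mul] at h16
      linear_combination h16 / 4
    have hTr01 : P0.trace + P1.trace = 4 * (γ:ℂ)^2 := by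
      have h := congrArg Matrix.trace hsum
      rw [Matrix.trace_add, Matrix.trace_add, aux_trace_one] at h
      linear_combination h - hTrPe
    -- certificate decompositions
    have h0 : (rho false * P0).trace = ((1/4 : ℂ) + (Real.sqrt 2 : ℂ)/16) * P0.trace
        - ((Real.sqrt 2 : ℂ)/8) * ((proj PsiM * P0).trace + (proj PhiM * ptransB P0).trace) := by
      rw [aux_cert0, Matrix.sub_mul, Matrix.smul_mul, Matrix.smul_mul, Matrix.one_mul,
        Matrix.add_mul, Matrix.trace_sub, Matrix.trace_smul, Matrix.trace_smul,
        Matrix.trace_add, aux_trace_ptransB_mul (proj PhiM) P0, smul_eq_mul, smul_eq_mul]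
    have h1 : (rho true * P1).trace = ((1/4 : ℂ) + (Real.sqrt 2 : ℂ)/16) * P1.trace
        - ((Real.sqrt 2 : ℂ)/8) * ((proj PsiP * P1).trace + (proj PhiP * ptransB P1).trace) := by
      rw [aux_cert1, Matrix.sub_mul, Matrix.smul_mul, Matrix.smul_mul, Matrix.one_mul,
        Matrix.add_mul, Matrix.trace_sub, Matrix.trace_smul, Matrix.trace_smul,
        Matrix.trace_add, aux_trace_ptransB_mul (proj PhiP) P1, smul_eq_mul, smul_eq_mul]
    have hs0 : 0 ≤ (proj PsiM * P0).trace := aux_trace_psd_mul_nonneg (aux_proj_psd _) hP0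
    have hs1 : 0 ≤ (proj PhiM * ptransB P0).trace :=
      aux_trace_psd_mul_nonneg (aux_proj_psd _) hppt0.2
    have hs2 : 0 ≤ (proj PsiP * P1).trace := aux_trace_psd_mul_nonneg (aux_proj_psd _) hP1
    have hs3 : 0 ≤ (proj PhiP * ptransB P1).trace :=
      aux_trace_psd_mul_nonneg (aux_proj_psd _) hppt1.2
    set Sv : ℂ := ((proj PsiM * P0).trace + (proj PhiM * ptransB P0).trace)
      + ((proj PsiP * P1).trace + (proj PhiP * ptransB P1).trace) with hSv
    have hSnn : 0 ≤ Sv := add_nonneg (add_nonneg hs0 hs1) (add_nonneg hs2 hs3)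
    have hSre : 0 ≤ Sv.re := by
      have := (Complex.le_def.mp hSnn).1
      simpa using this
    have htot : (rho false * P0 + rho true * P1).trace
        = ((1/4 : ℂ) + (Real.sqrt 2 : ℂ)/16) * (4*(γ:ℂ)^2) - ((Real.sqrt 2 : ℂ)/8) * Sv := by
      rw [Matrix.trace_add, h0, h1, hSv]
      linear_combination ((1/4 : ℂ) + (Real.sqrt 2 : ℂ)/16) * hTr01
    have hre_tot : ((rho false * P0 + rho true * P1).trace).re
        = (1/4 + Real.sqrt 2/16) * (4*γ^2) - (Real.sqrt 2/8) * Sv.re := by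
      rw [htot]
      have e1 : ((1/4 : ℂ) + (Real.sqrt 2 : ℂ)/16) * (4*(γ:ℂ)^2)
          = (((1/4 + Real.sqrt 2/16) * (4*γ^2) : ℝ) : ℂ) := by push_cast; ring
      have e2 : ((Real.sqrt 2 : ℂ)/8) * Sv = ((Real.sqrt 2/8 : ℝ) : ℂ) * Sv := by push_cast; ring
      rw [e1, e2, Complex.sub_re, Complex.ofReal_re, Complex.re_ofReal_mul]
    have hG : Gval P0 P1 ≤ γ^2 * (1/2 + Real.sqrt 2/8) := by
      rw [Gval, hre_tot]
      have hnn : 0 ≤ (Real.sqrt 2/8) * Sv.re := mul_nonneg (by positivity) hSre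
      nlinarith [hnn]
    show Gval P0 P1 / γ^2 ≤ 1/2 + 1/(4*Real.sqrt 2)
    rw [aux_target_eq, div_le_iff₀ hγ2]
    calc Gval P0 P1 ≤ γ^2 * (1/2 + Real.sqrt 2/8) := hG
      _ = (1/2 + Real.sqrt 2/8) * γ^2 := by ring
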